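/- Let F be a finite collection of open intervals of ℝ and let P be a longest chain in F (a sequence of distinct intervals of F of maximum length such that consecutive intervals intersect), with support Supp P as defined below. Then an interval A ∈ F appears in P if and only if A ∩ Supp P ≠ ∅. -/

import Mathlib

/-- The support of a chain `P = (J_1, …, J_t)`:
`J_1 ∪ J_t ∪ ⋃_{2 ≤ i ≤ t-2} (J_i ∩ J_{i+1})` (1-indexed). -/
def supp (P : List (Set ℝ)) : Set ℝ :=
  P.getD 0 ∅ ∪ P.getD (P.length - 1) ∅ ∪
    ⋃ i ∈ Finset.Ico 1 (P.length - 2), (P.getD i ∅ ∩ P.getD (i + 1) ∅)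

/-- An interval `A ∈ F` belongs to a longest chain `P` in `F` if and only if `A` meets
the support of `P`. -/
theorem stmt5 (F : Finset (Set ℝ)) (hF : ∀ A ∈ F, ∃ a b : ℝ, a < b ∧ A = Set.Ioo a b)
    (P : List (Set ℝ))
    (hP : P.Nodup ∧ (∀ J ∈ P, J ∈ F) ∧ List.Chain' (fun A B => (A ∩ B).Nonempty) P)
    (hlong : ∀ Q : List (Set ℝ),
      (Q.Nodup ∧ (∀ J ∈ Q, J ∈ F) ∧ List.Chain' (fun A B => (A ∩ B).Nonempty) Q) →
      Q.length ≤ P.length)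
    (A : Set ℝ) (hA : A ∈ F) :
    A ∈ P ↔ (A ∩ supp P).Nonempty := by
  obtain ⟨hnd, hmem, hch⟩ := hP
  have hget : ∀ {k : ℕ}, k < P.length → P.getD k ∅ = P[k]! := by
    intro k hk
    simp [List.getD_eq_getElem?_getD, List.getElem?_eq_getElem hk,
      getElem!_pos P k hk]
  have hchain : ∀ i, i + 1 < P.length → (P[i]! ∩ P[i+1]!).Nonempty := by
    intro i h
    have := List.isChain_iff_getElem.mp hch i (by omega)
    simpa [List.get_eq_getElem, getElem!_pos P i (by omega),
      getElem!_pos P (i+1) h] using this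
  constructor
  · -- forward direction
    intro hAP
    obtain ⟨k, hk, hkA⟩ := List.getElem_of_mem hAP
    have hkA' : P[k]! = A := by rw [getElem!_pos P k hk]; exact hkA
    obtain ⟨a, b, hab, hEq⟩ := hF A hA
    have hAne : A.Nonempty := by rw [hEq]; exact Set.nonempty_Ioo.mpr hab
    by_cases h0 : k = 0
    · subst h0
      obtain ⟨x, hx⟩ := hAne
      exact ⟨x, hx, Or.inl (Or.inl (by rw [hget hk, hkA']; exact hx))⟩
    by_cases h1 : k = P.length - 1
    · obtain ⟨x, hx⟩ := hAne
      exact ⟨x, hx, Or.inl (Or.inr (by rw [← h1, hget hk, hkA']; exact hx))⟩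
    -- now 1 ≤ k ≤ P.length - 2
    have hk1 : 1 ≤ k := by omega
    have hk2 : k < P.length - 1 := by omega
    by_cases h3 : k < P.length - 2
    · obtain ⟨x, hx1, hx2⟩ := hchain k (by omega)
      refine ⟨x, by rwa [hkA'] at hx1, Or.inr ?_⟩
      simp only [Set.mem_iUnion, exists_prop, Finset.mem_Ico]
      exact ⟨k, ⟨hk1, h3⟩, by rw [hget hk, hget (by omega)]; exact ⟨hx1, hx2⟩⟩
    · -- k = P.length - 2
      have hk3 : k = P.length - 2 := by omega
      obtain ⟨x, hx1, hx2⟩ := hchain (k-1) (by omega)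
      rw [(by omega : k - 1 + 1 = k)] at hx2
      by_cases h4 : k = 1
      · refine ⟨x, by rwa [hkA'] at hx2, Or.inl (Or.inl ?_)⟩
        rw [hget (by omega : 0 < P.length)]
        rw [(by omega : k - 1 = 0)] at hx1; exact hx1
      · refine ⟨x, by rwa [hkA'] at hx2, Or.inr ?_⟩
        simp only [Set.mem_iUnion, exists_prop, Finset.mem_Ico]
        refine ⟨k - 1, ⟨by omega, by omega⟩, ?_⟩
        rw [hget (by omega), hget (by omega), (by omega : k - 1 + 1 = k)]
        exact ⟨hx1, hx2⟩
  · -- backward direction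
    rintro ⟨x, hxA, hxS⟩
    by_contra hAP
    have hPne : P ≠ [] := by
      rintro rfl
      simp [supp] at hxS
    have ht0 : 0 < P.length := List.length_pos_iff.mpr hPne
    rcases hxS with (hx0 | hx1) | hxm
    · -- x ∈ P[0] : extend at the front
      rw [hget ht0] at hx0
      have hQ := hlong (A :: P) ⟨List.nodup_cons.mpr ⟨hAP, hnd⟩,
        by intro J hJ
           rcases List.mem_cons.mp hJ with rfl | hJ
           exacts [hA, hmem J hJ],
        hch.cons (by
          intro y hy
          rw [List.head?_eq_getElem?, List.getElem?_eq_getElem ht0] at hy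
          obtain rfl : y = P[0] := by simpa using hy.symm
          exact ⟨x, hxA, by rwa [getElem!_pos P 0 ht0] at hx0⟩)⟩
      simp at hQ
    · -- x ∈ P[t-1] : extend at the back
      rw [hget (by omega : P.length - 1 < P.length)] at hx1
      have hQ := hlong (P ++ [A]) ⟨by
          rw [List.nodup_append]
          exact ⟨hnd, List.nodup_singleton A, by simpa using fun a (ha : a ∈ P) (h : a = A) => hAP (h ▸ ha)⟩,
        by intro J hJ; rcases List.mem_append.mp hJ with hJ | hJ
           · exact hmem J hJ
           · simp at hJ; subst hJ; exact hA,
        List.isChain_append.mpr ⟨hch, List.isChain_singleton A, by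
          intro z hz y hy
          rw [List.getLast?_eq_getElem?, List.getElem?_eq_getElem (by omega : P.length - 1 < P.length)] at hz
          obtain rfl : z = P[P.length - 1] := by simpa using hz.symm
          obtain rfl : y = A := by simpa using hy.symm
          exact ⟨x, by rwa [getElem!_pos P _ (by omega)] at hx1, hxA⟩⟩⟩
      simp at hQ
    · -- x ∈ P[i] ∩ P[i+1] : insert in the middle
      simp only [Set.mem_iUnion, exists_prop, Finset.mem_Ico] at hxm
      obtain ⟨i, ⟨hi1, hi2⟩, hxi⟩ := hxm
      have hiP : i + 1 < P.length := by omega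
      rw [hget (by omega), hget hiP] at hxi
      rw [getElem!_pos P i (by omega), getElem!_pos P (i+1) hiP] at hxi
      obtain ⟨hxi1, hxi2⟩ := hxi
      set Q : List (Set ℝ) := P.take (i+1) ++ A :: P.drop (i+1) with hQdef
      have hperm : Q.Perm (A :: P) := by
        have := List.perm_middle (a := A) (l₁ := P.take (i+1)) (l₂ := P.drop (i+1))
        rwa [List.take_append_drop] at this
      have htake : (P.take (i+1)).getLast? = some P[i] := by
        rw [List.getLast?_eq_getElem?, List.getElem?_take]
        have hlen : (P.take (i+1)).length = i + 1 := by
          rw [List.length_take]; omega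
        rw [hlen]
        simp [List.getElem?_eq_getElem (by omega : i < P.length)]
      have hQ := hlong Q ⟨hperm.nodup_iff.mpr (List.nodup_cons.mpr ⟨hAP, hnd⟩),
        by intro J hJ
           rcases List.mem_cons.mp (hperm.mem_iff.mp hJ) with rfl | hJ
           exacts [hA, hmem J hJ],
        List.isChain_append.mpr ⟨hch.take (i+1), (hch.drop (i+1)).cons (by
            intro y hy
            rw [List.head?_drop, List.getElem?_eq_getElem hiP] at hy
            obtain rfl : y = P[i+1] := by simpa using hy.symm
            exact ⟨x, hxA, hxi2⟩), by
          intro z hz y hy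
          rw [htake] at hz
          obtain rfl : z = P[i] := by simpa using hz.symm
          obtain rfl : y = A := by simpa using hy.symm
          exact ⟨x, hxi1, hxA⟩⟩⟩
      have hlen : Q.length = P.length + 1 := by
        rw [hperm.length_eq]; simp
      omega
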